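/- For every integer m ≥ 1 there exists a constant β_m > 0 such that for all integers n ≥ 0, φ³_{n,m} ≤ β_m · (n+1)^{-5/2} · (256/27)^n. -/

import Mathlib

/-- The number of rooted type III triangulations of a disc with m+2 boundary
vertices and n internal vertices (for m ≥ 1). -/
noncomputable def phi3 (n m : ℕ) : ℝ :=
  (2 * Nat.factorial (2 * m + 1) * Nat.factorial (4 * n + 2 * m - 1) : ℝ) /
    (Nat.factorial (m - 1) * Nat.factorial (m + 1) * Nat.factorial n *
      Nat.factorial (3 * n + 2 * m + 1))

lemma phi3_pos (n m : ℕ) : 0 < phi3 n m := by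
  unfold phi3
  apply div_pos
  · positivity
  · have := Nat.factorial_pos (m-1)
    positivity

lemma fac4 (a : ℕ) : (Nat.factorial (a+4) : ℝ)
    = ((a:ℝ)+4)*((a:ℝ)+3)*((a:ℝ)+2)*((a:ℝ)+1)*(Nat.factorial a) := by
  rw [show a+4 = (a+3)+1 from rfl, Nat.factorial_succ,
    show a+3 = (a+2)+1 from rfl, Nat.factorial_succ,
    show a+2 = (a+1)+1 from rfl, Nat.factorial_succ, Nat.factorial_succ]
  push_cast; ring

lemma fac3 (a : ℕ) : (Nat.factorial (a+3) : ℝ)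
    = ((a:ℝ)+3)*((a:ℝ)+2)*((a:ℝ)+1)*(Nat.factorial a) := by
  rw [show a+3 = (a+2)+1 from rfl, Nat.factorial_succ,
    show a+2 = (a+1)+1 from rfl, Nat.factorial_succ, Nat.factorial_succ]
  push_cast; ring

set_option maxHeartbeats 2000000 in
lemma phi3_rec (n k : ℕ) :
    phi3 (n+1) (k+1) * (((n:ℝ)+1) * (3*(n:ℝ)+2*(k:ℝ)+4) * (3*(n:ℝ)+2*(k:ℝ)+5) * (3*(n:ℝ)+2*(k:ℝ)+6)) = phi3 n (k+1) * ((4*(n:ℝ)+2*(k:ℝ)+2) * (4*(n:ℝ)+2*(k:ℝ)+3) * (4*(n:ℝ)+2*(k:ℝ)+4) * (4*(n:ℝ)+2*(k:ℝ)+5)) := by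
  unfold phi3
  rw [show 4*(n+1)+2*(k+1)-1 = (4*n+2*k+1)+4 from by omega,
      show 3*(n+1)+2*(k+1)+1 = (3*n+2*k+3)+3 from by omega,
      show 4*n+2*(k+1)-1 = 4*n+2*k+1 from by omega,
      show 3*n+2*(k+1)+1 = 3*n+2*k+3 from by omega,
      fac4, fac3, Nat.factorial_succ n]
  have h1 : (Nat.factorial (2*(k+1)+1) : ℝ) ≠ 0 := by positivity
  have h2 : (Nat.factorial ((k+1)-1) : ℝ) ≠ 0 := by positivity
  have h3 : (Nat.factorial ((k+1)+1) : ℝ) ≠ 0 := by positivity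
  have h4 : (Nat.factorial n : ℝ) ≠ 0 := by positivity
  have h5 : (Nat.factorial (3*n+2*k+3) : ℝ) ≠ 0 := by positivity
  have h6 : (Nat.factorial (4*n+2*k+1) : ℝ) ≠ 0 := by positivity
  push_cast
  field_simp
  ring

set_option maxHeartbeats 1000000 in
lemma keyA (x t : ℝ) (hx : 0 ≤ x) (ht : 0 ≤ t) :
    729 * ((4*x+2*t+2)*(4*x+2*t+3)*(4*x+2*t+4)*(4*x+2*t+5))^2 * (x+2)^5
    ≤ 65536 * ((x+1)*(3*x+2*t+4)*(3*x+2*t+5)*(3*x+2*t+6))^2 * ((x+1)^2 + (4*t^2+4*t+10))^2 * (x+1) := by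
  have hD : (0:ℝ) ≤ 113854003200 + 362991298560*t^1 + 587078989312*t^2 + 633016898560*t^3 + 494271782400*t^4 + 287831433216*t^5 + 125555175424*t^6 + 39980384256*t^7 + 8701403136*t^8 + 1140850688*t^9 + 67108864*t^10 + 802307496960*x^1 + 2363079588864*x^1*t^1 + 3585444814592*x^1*t^2 + 3653567332864*x^1*t^3 + 2694859942656*x^1*t^4 + 1478033477632*x^1*t^5 + 603548375040*x^1*t^6 + 177533919232*x^1*t^7 + 34932011008*x^1*t^8 + 4026531840*x^1*t^9 + 201326592*x^1*t^10 + 2535891250176*x^2 + 6823160819712*x^2*t^1 + 9633461756672*x^2*t^2 + 9197807512064*x^2*t^3 + 6339420130048*x^2*t^4 + 3231176781824*x^2*t^5 + 1213123041280*x^2*t^6 + 321003560960*x^2*t^7 + 54880120832*x^2*t^8 + 5234491392*x^2*t^9 + 201326592*x^2*t^10 + 4756085033472*x^3 + 11535011661312*x^3*t^1 + 15017861908352*x^3*t^2 + 13298268832000*x^3*t^3 + 8447634494848*x^3*t^4 + 3931136034816*x^3*t^5 + 1322817465344*x^3*t^6 + 302451806208*x^3*t^7 + 42069792768*x^3*t^8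 + 2952790016*x^3*t^9 + 67108864*x^3*t^10 + 5903497519488*x^4 + 12700957338240*x^4*t^1 + 15099471774432*x^4*t^2 + 12249116309056*x^4*t^3 + 7045267928416*x^4*t^4 + 2921290189312*x^4*t^5 + 848108788480*x^4*t^6 + 156956283904*x^4*t^7 + 15718385152*x^4*t^8 + 603979776*x^4*t^9 + 5122626496704*x^5 + 9589249612992*x^5*t^1 + 10307505673520*x^5*t^2 + 7547876042144*x^5*t^3 + 3837978295024*x^5*t^4 + 1368049171712*x^5*t^5 + 322054158208*x^5*t^6 + 42782982656*x^5*t^7 + 2298291968*x^5*t^8 + 3197927720448*x^6 + 5086834424256*x^6*t^1 + 4903391027392*x^6*t^2 + 3183567423360*x^6*t^3 + 1383042158080*x^6*t^4 + 399542192640*x^6*t^5 + 67844733952*x^6*t^6 + 4828852224*x^6*t^7 + 1451763824832*x^7 + 1904166235008*x^7*t^1 + 1642426992256*x^7*t^2 + 924731885568*x^7*t^3 + 324969906688*x^7*t^4 + 67898812416*x^7*t^5 + 6211833856*x^7*t^6 + 475016276736*x^8 + 492857458176*x^8*t^1 + 385913659392*x^8*t^2 + 182509596672*x^8*t^3 +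 46685712384*x^8*t^4 + 5276712960*x^8*t^5 + 107630472960*x^9 + 82682449920*x^9*t^1 + 62226302976*x^9*t^2 + 23051132928*x^9*t^3 + 3244990464*x^9*t^4 + 15245107200*x^10 + 7619125248*x^10*t^1 + 6514753536*x^10*t^2 + 1477509120*x^10*t^3 + 1018552320*x^11 + 230916096*x^11*t^1 + 366280704*x^11*t^2 := by positivity
  nlinarith [hD]

lemma sqrt_step (A B : ℝ) (hA : 0 ≤ A) (hB : 0 ≤ B) (h : A^2 ≤ B^2) : A ≤ B := by
  nlinarith [h, hA, hB]

lemma div_step (P Q C u v y : ℝ) (hQ : 0 < Q) (hy : 0 < y)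
    (h : 27*P*u*y^2 ≤ 256*Q*(y^2+C)*v) :
    P/Q*u*(27/256) ≤ (1 + C/y^2)*v := by
  rw [show P/Q*u*(27/256) = (27*P*u)/(256*Q) from by ring,
    show (1+C/y^2)*v = ((y^2+C)*v)/(y^2) from by field_simp,
    div_le_div_iff₀ (by positivity) (by positivity)]
  nlinarith [h]
  
/-- the weighted sequence -/
noncomputable def aSeq (k n : ℕ) : ℝ :=
  phi3 n (k+1) * ((n:ℝ)+1) ^ ((5:ℝ)/2) * (27/256:ℝ)^n

lemma aSeq_pos (k n : ℕ) : 0 < aSeq k n :=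
  mul_pos (mul_pos (phi3_pos n (k+1)) (Real.rpow_pos_of_pos (by positivity) _))
    (by positivity)

lemma rpow_five_half_sq (z : ℝ) (hz : 0 ≤ z) : (z ^ ((5:ℝ)/2))^2 = z^5 := by
  rw [← Real.rpow_natCast (z ^ ((5:ℝ)/2)) 2, ← Real.rpow_mul hz,
    show ((5:ℝ)/2) * ((2:ℕ):ℝ) = ((5:ℕ):ℝ) from by norm_num, Real.rpow_natCast]

set_option maxHeartbeats 2000000 in
lemma aSeq_step (k n : ℕ) :
    aSeq k (n+1) ≤ (1 + (4*(k:ℝ)^2+4*(k:ℝ)+10)/(((n:ℝ)+1)^2)) * aSeq k n := by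
  have hx : (0:ℝ) ≤ (n:ℝ) := Nat.cast_nonneg n
  have ht : (0:ℝ) ≤ (k:ℝ) := Nat.cast_nonneg k
  have hQ : (0:ℝ) < (((n:ℝ)+1) * (3*(n:ℝ)+2*(k:ℝ)+4) * (3*(n:ℝ)+2*(k:ℝ)+5) * (3*(n:ℝ)+2*(k:ℝ)+6)) := by positivity
  have hrec : phi3 (n+1) (k+1) = phi3 n (k+1) * ((4*(n:ℝ)+2*(k:ℝ)+2) * (4*(n:ℝ)+2*(k:ℝ)+3) * (4*(n:ℝ)+2*(k:ℝ)+4) * (4*(n:ℝ)+2*(k:ℝ)+5)) / (((n:ℝ)+1) * (3*(n:ℝ)+2*(k:ℝ)+4) * (3*(n:ℝ)+2*(k:ℝ)+5) * (3*(n:ℝ)+2*(k:ℝ)+6)) := by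
    rw [eq_div_iff hQ.ne']
    exact phi3_rec n k
  have hu : (0:ℝ) ≤ (((n:ℝ)+2) ^ ((5:ℝ)/2)) := Real.rpow_nonneg (by positivity) _
  have hv : (0:ℝ) ≤ (((n:ℝ)+1) ^ ((5:ℝ)/2)) := Real.rpow_nonneg (by positivity) _
  have hu2 : ((((n:ℝ)+2) ^ ((5:ℝ)/2)))^2 = ((n:ℝ)+2)^5 := rpow_five_half_sq _ (by positivity)
  have hv2 : ((((n:ℝ)+1) ^ ((5:ℝ)/2)))^2 = ((n:ℝ)+1)^5 := rpow_five_half_sq _ (by positivity)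
  have hA := keyA (n:ℝ) (k:ℝ) hx ht
  have hmul : 729 * ((4*(n:ℝ)+2*(k:ℝ)+2) * (4*(n:ℝ)+2*(k:ℝ)+3) * (4*(n:ℝ)+2*(k:ℝ)+4) * (4*(n:ℝ)+2*(k:ℝ)+5))^2 * ((n:ℝ)+2)^5 * ((n:ℝ)+1)^4
      ≤ 65536 * (((n:ℝ)+1) * (3*(n:ℝ)+2*(k:ℝ)+4) * (3*(n:ℝ)+2*(k:ℝ)+5) * (3*(n:ℝ)+2*(k:ℝ)+6))^2 * (((n:ℝ)+1)^2 + (4*(k:ℝ)^2+4*(k:ℝ)+10))^2 * ((n:ℝ)+1) * ((n:ℝ)+1)^4 :=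
    mul_le_mul_of_nonneg_right hA (by positivity)
  have e1 : (27 * ((4*(n:ℝ)+2*(k:ℝ)+2) * (4*(n:ℝ)+2*(k:ℝ)+3) * (4*(n:ℝ)+2*(k:ℝ)+4) * (4*(n:ℝ)+2*(k:ℝ)+5)) * (((n:ℝ)+2) ^ ((5:ℝ)/2)) * (((n:ℝ)+1)^2))^2 = 729 * ((4*(n:ℝ)+2*(k:ℝ)+2) * (4*(n:ℝ)+2*(k:ℝ)+3) * (4*(n:ℝ)+2*(k:ℝ)+4) * (4*(n:ℝ)+2*(k:ℝ)+5))^2 * ((n:ℝ)+2)^5 * ((n:ℝ)+1)^4 := by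
    rw [show (27 * ((4*(n:ℝ)+2*(k:ℝ)+2) * (4*(n:ℝ)+2*(k:ℝ)+3) * (4*(n:ℝ)+2*(k:ℝ)+4) * (4*(n:ℝ)+2*(k:ℝ)+5)) * (((n:ℝ)+2) ^ ((5:ℝ)/2)) * (((n:ℝ)+1)^2))^2
      = ((((n:ℝ)+2) ^ ((5:ℝ)/2)))^2 * (729 * ((4*(n:ℝ)+2*(k:ℝ)+2) * (4*(n:ℝ)+2*(k:ℝ)+3) * (4*(n:ℝ)+2*(k:ℝ)+4) * (4*(n:ℝ)+2*(k:ℝ)+5))^2 * ((n:ℝ)+1)^4) from by ring, hu2]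
    ring
  have e2 : (256 * (((n:ℝ)+1) * (3*(n:ℝ)+2*(k:ℝ)+4) * (3*(n:ℝ)+2*(k:ℝ)+5) * (3*(n:ℝ)+2*(k:ℝ)+6)) * ((((n:ℝ)+1)^2) + (4*(k:ℝ)^2+4*(k:ℝ)+10)) * (((n:ℝ)+1) ^ ((5:ℝ)/2)))^2
      = 65536 * (((n:ℝ)+1) * (3*(n:ℝ)+2*(k:ℝ)+4) * (3*(n:ℝ)+2*(k:ℝ)+5) * (3*(n:ℝ)+2*(k:ℝ)+6))^2 * (((n:ℝ)+1)^2 + (4*(k:ℝ)^2+4*(k:ℝ)+10))^2 * ((n:ℝ)+1) * ((n:ℝ)+1)^4 := by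
    rw [show (256 * (((n:ℝ)+1) * (3*(n:ℝ)+2*(k:ℝ)+4) * (3*(n:ℝ)+2*(k:ℝ)+5) * (3*(n:ℝ)+2*(k:ℝ)+6)) * ((((n:ℝ)+1)^2) + (4*(k:ℝ)^2+4*(k:ℝ)+10)) * (((n:ℝ)+1) ^ ((5:ℝ)/2)))^2
      = ((((n:ℝ)+1) ^ ((5:ℝ)/2)))^2 * (65536 * (((n:ℝ)+1) * (3*(n:ℝ)+2*(k:ℝ)+4) * (3*(n:ℝ)+2*(k:ℝ)+5) * (3*(n:ℝ)+2*(k:ℝ)+6))^2 * (((n:ℝ)+1)^2 + (4*(k:ℝ)^2+4*(k:ℝ)+10))^2) from by ring, hv2]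
    ring
  have hAB : 27 * ((4*(n:ℝ)+2*(k:ℝ)+2) * (4*(n:ℝ)+2*(k:ℝ)+3) * (4*(n:ℝ)+2*(k:ℝ)+4) * (4*(n:ℝ)+2*(k:ℝ)+5)) * (((n:ℝ)+2) ^ ((5:ℝ)/2)) * (((n:ℝ)+1)^2) ≤ 256 * (((n:ℝ)+1) * (3*(n:ℝ)+2*(k:ℝ)+4) * (3*(n:ℝ)+2*(k:ℝ)+5) * (3*(n:ℝ)+2*(k:ℝ)+6)) * ((((n:ℝ)+1)^2) + (4*(k:ℝ)^2+4*(k:ℝ)+10)) * (((n:ℝ)+1) ^ ((5:ℝ)/2)) := by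
    apply sqrt_step _ _ (by positivity) (by positivity)
    rw [e1, e2]
    exact hmul
  have hred : ((4*(n:ℝ)+2*(k:ℝ)+2) * (4*(n:ℝ)+2*(k:ℝ)+3) * (4*(n:ℝ)+2*(k:ℝ)+4) * (4*(n:ℝ)+2*(k:ℝ)+5))/(((n:ℝ)+1) * (3*(n:ℝ)+2*(k:ℝ)+4) * (3*(n:ℝ)+2*(k:ℝ)+5) * (3*(n:ℝ)+2*(k:ℝ)+6))*(((n:ℝ)+2) ^ ((5:ℝ)/2))*(27/256) ≤ (1 + (4*(k:ℝ)^2+4*(k:ℝ)+10)/(((n:ℝ)+1)^2)) * (((n:ℝ)+1) ^ ((5:ℝ)/2)) := by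
    apply div_step _ _ _ _ _ _ hQ (by positivity)
    linear_combination hAB
  have hphi := (phi3_pos n (k+1)).le
  calc aSeq k (n+1)
      = (phi3 n (k+1) * (27/256:ℝ)^n) * (((4*(n:ℝ)+2*(k:ℝ)+2) * (4*(n:ℝ)+2*(k:ℝ)+3) * (4*(n:ℝ)+2*(k:ℝ)+4) * (4*(n:ℝ)+2*(k:ℝ)+5))/(((n:ℝ)+1) * (3*(n:ℝ)+2*(k:ℝ)+4) * (3*(n:ℝ)+2*(k:ℝ)+5) * (3*(n:ℝ)+2*(k:ℝ)+6))*(((n:ℝ)+2) ^ ((5:ℝ)/2))*(27/256)) := by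
        unfold aSeq
        rw [hrec, show ((n+1:ℕ):ℝ)+1 = (n:ℝ)+2 from by push_cast; ring]
        ring
    _ ≤ (phi3 n (k+1) * (27/256:ℝ)^n) * ((1 + (4*(k:ℝ)^2+4*(k:ℝ)+10)/(((n:ℝ)+1)^2)) * (((n:ℝ)+1) ^ ((5:ℝ)/2))) :=
        mul_le_mul_of_nonneg_left hred (by positivity)
    _ = (1 + (4*(k:ℝ)^2+4*(k:ℝ)+10)/(((n:ℝ)+1)^2)) * aSeq k n := by unfold aSeq; ring

lemma aSeq_bound (k : ℕ) (n : ℕ) :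
    aSeq k n ≤ aSeq k 0 * Real.exp ((4*(k:ℝ)^2+4*(k:ℝ)+10) * (2 - 2/((n:ℝ)+1))) := by
  have hC : (0:ℝ) ≤ (4*(k:ℝ)^2+4*(k:ℝ)+10) := by positivity
  have ha0 : 0 < aSeq k 0 := aSeq_pos k 0
  induction n with
  | zero =>
      have h0 : (4*(k:ℝ)^2+4*(k:ℝ)+10) * (2 - 2/(((0:ℕ):ℝ)+1)) = 0 := by norm_num
      rw [h0, Real.exp_zero, mul_one]
  | succ n ih =>
      have hx : (0:ℝ) ≤ (n:ℝ) := Nat.cast_nonneg n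
      have hstep := aSeq_step k n
      have hexp1 : 1 + (4*(k:ℝ)^2+4*(k:ℝ)+10)/(((n:ℝ)+1)^2) ≤ Real.exp ((4*(k:ℝ)^2+4*(k:ℝ)+10)/(((n:ℝ)+1)^2)) := by
        have := Real.add_one_le_exp ((4*(k:ℝ)^2+4*(k:ℝ)+10)/(((n:ℝ)+1)^2))
        linarith
      have han : 0 ≤ aSeq k n := (aSeq_pos k n).le
      have hfrac : 1/(((n:ℝ)+1)^2) ≤ 2/((n:ℝ)+1) - 2/((n:ℝ)+2) := by
        rw [show 2/((n:ℝ)+1) - 2/((n:ℝ)+2) = 2/(((n:ℝ)+1)*((n:ℝ)+2)) from by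
            rw [div_sub_div _ _ (by positivity) (by positivity)]; ring_nf,
          div_le_div_iff₀ (by positivity) (by positivity)]
        nlinarith
      have hexpo : (4*(k:ℝ)^2+4*(k:ℝ)+10)/(((n:ℝ)+1)^2) + (4*(k:ℝ)^2+4*(k:ℝ)+10) * (2 - 2/((n:ℝ)+1)) ≤ (4*(k:ℝ)^2+4*(k:ℝ)+10) * (2 - 2/((n:ℝ)+2)) := by
        have h := mul_le_mul_of_nonneg_left hfrac hC
        have e : (4*(k:ℝ)^2+4*(k:ℝ)+10)/(((n:ℝ)+1)^2)
            = (4*(k:ℝ)^2+4*(k:ℝ)+10) * (1/(((n:ℝ)+1)^2)) := by ring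
        rw [e]
        nlinarith [h]
      calc aSeq k (n+1)
          ≤ (1 + (4*(k:ℝ)^2+4*(k:ℝ)+10)/(((n:ℝ)+1)^2)) * aSeq k n := hstep
        _ ≤ Real.exp ((4*(k:ℝ)^2+4*(k:ℝ)+10)/(((n:ℝ)+1)^2)) * aSeq k n :=
            mul_le_mul_of_nonneg_right hexp1 han
        _ ≤ Real.exp ((4*(k:ℝ)^2+4*(k:ℝ)+10)/(((n:ℝ)+1)^2)) * (aSeq k 0 * Real.exp ((4*(k:ℝ)^2+4*(k:ℝ)+10) * (2 - 2/((n:ℝ)+1)))) :=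
            mul_le_mul_of_nonneg_left ih (Real.exp_nonneg _)
        _ = aSeq k 0 * Real.exp ((4*(k:ℝ)^2+4*(k:ℝ)+10)/(((n:ℝ)+1)^2) + (4*(k:ℝ)^2+4*(k:ℝ)+10) * (2 - 2/((n:ℝ)+1))) := by
            rw [Real.exp_add]; ring
        _ ≤ aSeq k 0 * Real.exp ((4*(k:ℝ)^2+4*(k:ℝ)+10) * (2 - 2/((n:ℝ)+2))) :=
            mul_le_mul_of_nonneg_left (Real.exp_le_exp.mpr hexpo) ha0.le
        _ = aSeq k 0 * Real.exp ((4*(k:ℝ)^2+4*(k:ℝ)+10) * (2 - 2/(((n+1:ℕ):ℝ)+1))) := by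
            rw [show ((n+1:ℕ):ℝ) = (n:ℝ)+1 from by push_cast; ring]
            ring_nf

/-- for m ≥ 1 there is β_m > 0 with
φ³_{n,m} ≤ β_m (n+1)^{-5/2} (256/27)^n for all n. -/
theorem phi3_upper_bound (m : ℕ) (hm : 1 ≤ m) :
    ∃ β : ℝ, 0 < β ∧ ∀ n : ℕ,
      phi3 n m ≤ β * ((n : ℝ) + 1) ^ (-(5 / 2) : ℝ) * (256 / 27 : ℝ) ^ n := by
  obtain ⟨k, rfl⟩ : ∃ k, m = k+1 := ⟨m-1, by omega⟩
  have hC : (0:ℝ) ≤ (4*(k:ℝ)^2+4*(k:ℝ)+10) := by positivity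
  refine ⟨aSeq k 0 * Real.exp (2*(4*(k:ℝ)^2+4*(k:ℝ)+10)),
    mul_pos (aSeq_pos k 0) (Real.exp_pos _), fun n => ?_⟩
  have hbd : aSeq k n ≤ aSeq k 0 * Real.exp (2*(4*(k:ℝ)^2+4*(k:ℝ)+10)) := by
    calc aSeq k n ≤ aSeq k 0 * Real.exp ((4*(k:ℝ)^2+4*(k:ℝ)+10) * (2 - 2/((n:ℝ)+1))) := aSeq_bound k n
      _ ≤ aSeq k 0 * Real.exp (2*(4*(k:ℝ)^2+4*(k:ℝ)+10)) := by
          apply mul_le_mul_of_nonneg_left _ (aSeq_pos k 0).le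
          apply Real.exp_le_exp.mpr
          have h2 : (0:ℝ) ≤ (4*(k:ℝ)^2+4*(k:ℝ)+10) * (2/((n:ℝ)+1)) := by positivity
          nlinarith [h2]
  have hid : phi3 n (k+1) = aSeq k n * ((n:ℝ)+1) ^ (-(5/2) : ℝ) * (256/27:ℝ)^n := by
    unfold aSeq
    have hrp : ((n:ℝ)+1) ^ ((5:ℝ)/2) * ((n:ℝ)+1) ^ (-(5/2) : ℝ) = 1 := by
      rw [← Real.rpow_add (by positivity)]
      norm_num
    have hpw : (27/256:ℝ)^n * (256/27:ℝ)^n = 1 := by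
      rw [← mul_pow]; norm_num
    calc phi3 n (k+1)
        = phi3 n (k+1) * (((n:ℝ)+1) ^ ((5:ℝ)/2) * ((n:ℝ)+1) ^ (-(5/2) : ℝ))
          * ((27/256:ℝ)^n * (256/27:ℝ)^n) := by rw [hrp, hpw]; ring
      _ = phi3 n (k+1) * ((n:ℝ)+1) ^ ((5:ℝ)/2) * (27/256:ℝ)^n * ((n:ℝ)+1) ^ (-(5/2) : ℝ)
          * (256/27:ℝ)^n := by ring
  rw [hid]
  have h1 : (0:ℝ) ≤ ((n:ℝ)+1) ^ (-(5/2) : ℝ) := Real.rpow_nonneg (by positivity) _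
  have h2 : (0:ℝ) ≤ (256/27:ℝ)^n := by positivity
  exact mul_le_mul_of_nonneg_right (mul_le_mul_of_nonneg_right hbd h1) h2
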